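/- Every principal sub-tensor of a P tensor is a P tensor; every principal sub-tensor of a P_0 tensor is a P_0 tensor. In particular, all diagonal entries a_{i...i} of a P tensor are positive, and of a P_0 tensor are nonnegative. -/
import Mathlib


open Finset

noncomputable section

/-- The contraction `(A x^{m})_i` of an order-`m+1` tensor with `m` copies of `x`. -/
def contrT {m n : ℕ} (A : (Fin (m+1) → Fin n) → ℝ) (x : Fin n → ℝ) (i : Fin n) : ℝ :=
  ∑ f : Fin m → Fin n, A (Fin.cons i f) * ∏ k, x (f k)

/-- `A x^M` for an order-`M` tensor. -/
def polyT {M n : ℕ} (A : (Fin M → Fin n) → ℝ) (x : Fin n → ℝ) : ℝ :=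
  ∑ f : Fin M → Fin n, A f * ∏ k, x (f k)

/-- P tensor: for every nonzero `x`, `max_i x_i (A x^{m-1})_i > 0`. -/
def IsPTensor {m n : ℕ} (A : (Fin (m+1) → Fin n) → ℝ) : Prop :=
  ∀ x : Fin n → ℝ, x ≠ 0 → ∃ i : Fin n, 0 < x i * contrT A x i

/-- P₀ tensor: for every nonzero `x` there is `i` with `x i ≠ 0` and `x_i (A x^{m-1})_i ≥ 0`. -/
def IsP0Tensor {m n : ℕ} (A : (Fin (m+1) → Fin n) → ℝ) : Prop :=
  ∀ x : Fin n → ℝ, x ≠ 0 → ∃ i : Fin n, x i ≠ 0 ∧ 0 ≤ x i * contrT A x i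

def infNorm {n : ℕ} (x : Fin n → ℝ) : ℝ := ⨆ i, |x i|

/-- The operator `T_A(x) = ‖x‖₂^{2-m} A x^{m-1}` (order of the tensor is `m+1`). -/
def TA {m n : ℕ} (A : (Fin (m+1) → Fin n) → ℝ) (x : Fin n → ℝ) (i : Fin n) : ℝ :=
  if x = 0 then 0
  else (Real.sqrt (∑ j, x j ^ 2)) ^ ((2 : ℤ) - ((m : ℤ) + 1)) * contrT A x i

/-- `α(T_A) = min_{‖x‖_∞ = 1} max_i x_i (T_A(x))_i`. -/
def alphaT {m n : ℕ} (A : (Fin (m+1) → Fin n) → ℝ) : ℝ :=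
  sInf ((fun x => ⨆ i, x i * TA A x i) '' {x : Fin n → ℝ | infNorm x = 1})

/-- B tensor of order `m+1`. -/
def IsBTensor {m n : ℕ} (B : (Fin (m+1) → Fin n) → ℝ) : Prop :=
  ∀ i : Fin n, (0 < ∑ f : Fin m → Fin n, B (Fin.cons i f)) ∧
    ∀ g : Fin m → Fin n, g ≠ (fun _ => i) →
      B (Fin.cons i g) < (1 / (n : ℝ) ^ m) * ∑ f : Fin m → Fin n, B (Fin.cons i f)

/-- B₀ tensor of order `m+1`. -/
def IsB0Tensor {m n : ℕ} (B : (Fin (m+1) → Fin n) → ℝ) : Prop :=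
  ∀ i : Fin n, (0 ≤ ∑ f : Fin m → Fin n, B (Fin.cons i f)) ∧
    ∀ g : Fin m → Fin n, g ≠ (fun _ => i) →
      B (Fin.cons i g) ≤ (1 / (n : ℝ) ^ m) * ∑ f : Fin m → Fin n, B (Fin.cons i f)

private lemma cons_comp {m n r : ℕ} (e : Fin r → Fin n) (i : Fin r) (f : Fin m → Fin r) :
    e ∘ Fin.cons i f = Fin.cons (e i) (e ∘ f) := by
  funext k
  cases k using Fin.cases <;> simp

private lemma extend_contr {m n r : ℕ} (A : (Fin (m+1) → Fin n) → ℝ)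
    (e : Fin r → Fin n) (he : Function.Injective e) (x : Fin r → ℝ) (i : Fin r) :
    contrT (fun f : Fin (m+1) → Fin r => A (e ∘ f)) x i
      = contrT A (Function.extend e x 0) (e i) := by
  classical
  unfold contrT
  have hinj : Function.Injective (fun f : Fin m → Fin r => e ∘ f) :=
    fun f g h => funext fun k => he (congrFun h k)
  have h1 : ∀ f : Fin m → Fin r,
      A (e ∘ Fin.cons i f) * ∏ k, x (f k)
        = A (Fin.cons (e i) (e ∘ f)) * ∏ k, Function.extend e x 0 ((e ∘ f) k) := by
    intro f
    rw [cons_comp]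
    congr 1
    exact Finset.prod_congr rfl fun k _ => (he.extend_apply x 0 (f k)).symm
  rw [Finset.sum_congr rfl fun f _ => h1 f]
  have himg := Finset.sum_image (s := (Finset.univ : Finset (Fin m → Fin r)))
      (g := fun f : Fin m → Fin r => e ∘ f)
      (f := fun g : Fin m → Fin n =>
        A (Fin.cons (e i) g) * ∏ k, Function.extend e x 0 (g k))
      (fun a _ b _ h => hinj h)
  rw [← himg]
  apply Finset.sum_subset (Finset.subset_univ _)
  intro g _ hg
  have : ∃ k, ¬ ∃ a, e a = g k := by
    by_contra hk
    push_neg at hk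
    apply hg
    choose f hf using hk
    exact Finset.mem_image.2 ⟨f, Finset.mem_univ _, funext hf⟩
  obtain ⟨k, hk⟩ := this
  have : Function.extend e x 0 (g k) = 0 := Function.extend_apply' x (0 : Fin n → ℝ) (g k) hk
  rw [Finset.prod_eq_zero (Finset.mem_univ k) this, mul_zero]

private lemma single_contr {m n : ℕ} (A : (Fin (m+1) → Fin n) → ℝ) (i : Fin n) :
    contrT A (fun j => if j = i then (1:ℝ) else 0) i = A (fun _ => i) := by
  classical
  unfold contrT
  rw [Finset.sum_eq_single (fun _ : Fin m => i)]
  · have : Fin.cons i (fun _ : Fin m => i) = fun _ : Fin (m+1) => i := by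
      funext k; cases k using Fin.cases <;> simp
    simp [this]
  · intro f _ hf
    have : ∃ k, f k ≠ i := by
      by_contra hk
      push_neg at hk
      exact hf (funext hk)
    obtain ⟨k, hk⟩ := this
    rw [Finset.prod_eq_zero (Finset.mem_univ k) (by simp [hk]), mul_zero]
  · simp

theorem stmt10 (m n r : ℕ)
    (A : (Fin (m+1) → Fin n) → ℝ)
    (e : Fin r → Fin n) (he : Function.Injective e) :
    (IsPTensor A →
      IsPTensor (fun f : Fin (m+1) → Fin r => A (e ∘ f)) ∧
        ∀ i : Fin n, 0 < A (fun _ => i)) ∧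
    (IsP0Tensor A →
      IsP0Tensor (fun f : Fin (m+1) → Fin r => A (e ∘ f)) ∧
        ∀ i : Fin n, 0 ≤ A (fun _ => i)) := by
  classical
  constructor
  · intro hA
    constructor
    · intro x hx
      set y := Function.extend e x 0 with hy
      have hy0 : y ≠ 0 := by
        intro h
        apply hx
        funext i
        have := congrFun h (e i)
        simpa [hy, he.extend_apply] using this
      obtain ⟨j, hj⟩ := hA y hy0
      have hyj : y j ≠ 0 := by
        intro h0; rw [h0, zero_mul] at hj; exact lt_irrefl 0 hj
      have hrange : ∃ i0, e i0 = j := by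
        by_contra hne
        exact hyj (Function.extend_apply' x (0 : Fin n → ℝ) j hne)
      obtain ⟨i0, rfl⟩ := hrange
      refine ⟨i0, ?_⟩
      rw [extend_contr A e he x i0, ← hy, ← he.extend_apply x (0 : Fin n → ℝ) i0, ← hy]
      exact hj
    · intro i
      set x : Fin n → ℝ := fun j => if j = i then (1:ℝ) else 0 with hxdef
      have hx : x ≠ 0 := by
        intro h
        have := congrFun h i
        simp [hxdef] at this
      obtain ⟨j, hj⟩ := hA x hx
      have hji : j = i := by
        by_contra hne
        rw [show x j = 0 by simp [hxdef, hne], zero_mul] at hj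
        exact lt_irrefl 0 hj
      subst hji
      rw [show x j = 1 by simp [hxdef], one_mul, single_contr] at hj
      exact hj
  · intro hA
    constructor
    · intro x hx
      set y := Function.extend e x 0 with hy
      have hy0 : y ≠ 0 := by
        intro h
        apply hx
        funext i
        have := congrFun h (e i)
        simpa [hy, he.extend_apply] using this
      obtain ⟨j, hj, hj2⟩ := hA y hy0
      have hrange : ∃ i0, e i0 = j := by
        by_contra hne
        exact hj (Function.extend_apply' x (0 : Fin n → ℝ) j hne)
      obtain ⟨i0, rfl⟩ := hrange
      refine ⟨i0, ?_, ?_⟩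
      · rw [← he.extend_apply x (0 : Fin n → ℝ) i0, ← hy]; exact hj
      · rw [extend_contr A e he x i0, ← hy, ← he.extend_apply x (0 : Fin n → ℝ) i0, ← hy]
        exact hj2
    · intro i
      set x : Fin n → ℝ := fun j => if j = i then (1:ℝ) else 0 with hxdef
      have hx : x ≠ 0 := by
        intro h
        have := congrFun h i
        simp [hxdef] at this
      obtain ⟨j, hj, hj2⟩ := hA x hx
      have hji : j = i := by
        by_contra hne
        exact hj (by simp [hxdef, hne])
      subst hji
      rw [show x j = 1 by simp [hxdef], one_mul, single_contr] at hj2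
      exact hj2
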